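/- Let ∂ be a derivation of a commutative ring A graded by an abelian group M, and suppose ∂ maps each homogeneous component into homogeneous elements. If f, h ∈ A are homogeneous with ∂f ≠ 0 and ∂h ≠ 0, then deg ∂(f) - deg f = deg ∂(h) - deg h. (Hence a homogeneous derivation has a well-defined degree.) -/

import Mathlib

/-- A sum of two nonzero homogeneous elements of distinct degrees is not in any
single graded piece. -/
lemma aux_sum_ne {A M : Type*} [CommRing A] [AddCommGroup M] [DecidableEq M]
    (𝒜 : M → AddSubgroup A) [GradedRing 𝒜] {x y : A} {m n k : M}
    (hx : x ∈ 𝒜 m) (hy : y ∈ 𝒜 n) (hx0 : x ≠ 0) (hy0 : y ≠ 0) (hmn : m ≠ n)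
    (hk : x + y ∈ 𝒜 k) : False := by
  have hdx : ((DirectSum.decompose 𝒜 (x + y)) m : A) = x := by
    rw [DirectSum.decompose_add, DirectSum.add_apply, AddSubgroup.coe_add,
      DirectSum.decompose_of_mem_same 𝒜 hx,
      DirectSum.decompose_of_mem_ne 𝒜 hy (Ne.symm hmn), add_zero]
  have hdy : ((DirectSum.decompose 𝒜 (x + y)) n : A) = y := by
    rw [DirectSum.decompose_add, DirectSum.add_apply, AddSubgroup.coe_add,
      DirectSum.decompose_of_mem_same 𝒜 hy,
      DirectSum.decompose_of_mem_ne 𝒜 hx hmn, zero_add]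
  by_cases hkm : k = m
  · subst hkm
    have := DirectSum.decompose_of_mem_ne 𝒜 hk hmn
    rw [hdy] at this
    exact hy0 this
  · have := DirectSum.decompose_of_mem_ne 𝒜 hk hkm
    rw [hdx] at this
    exact hx0 this

/-- Let `A` be an integral domain graded by an abelian group `M`, and `∂` a
derivation of `A` sending homogeneous elements to homogeneous elements.  If `f, h` are
homogeneous with `∂ f ≠ 0` and `∂ h ≠ 0`, then `deg ∂f - deg f = deg ∂h - deg h`
(so a homogeneous derivation has a well-defined degree). -/
theorem stmt_2 {A M : Type*} [CommRing A] [IsDomain A] [AddCommGroup M] [DecidableEq M]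
    (𝒜 : M → AddSubgroup A) [GradedRing 𝒜]
    (D : A → A)
    (hadd : ∀ a b, D (a + b) = D a + D b)
    (hLeibniz : ∀ a b, D (a * b) = a * D b + D a * b)
    (hhom : ∀ (d : M) (a : A), a ∈ 𝒜 d → SetLike.IsHomogeneousElem 𝒜 (D a))
    (f h : A) (df dh df' dh' : M)
    (hf : f ∈ 𝒜 df) (hh : h ∈ 𝒜 dh)
    (hdf : D f ∈ 𝒜 df') (hdh : D h ∈ 𝒜 dh')
    (hf0 : D f ≠ 0) (hh0 : D h ≠ 0) :
    df' - df = dh' - dh := by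
  have hD0 : D 0 = 0 := by
    have := hadd 0 0
    rw [add_zero] at this
    exact (left_eq_add.mp this)
  have hfne : f ≠ 0 := by rintro rfl; exact hf0 hD0
  have hhne : h ≠ 0 := by rintro rfl; exact hh0 hD0
  obtain ⟨k, hk⟩ := hhom (df + dh) (f * h) (SetLike.mul_mem_graded hf hh)
  rw [hLeibniz] at hk
  have hx : f * D h ∈ 𝒜 (df + dh') := SetLike.mul_mem_graded hf hdh
  have hy : D f * h ∈ 𝒜 (df' + dh) := SetLike.mul_mem_graded hdf hh
  by_cases hdeg : df + dh' = df' + dh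
  · rw [sub_eq_sub_iff_add_eq_add, ← hdeg]; exact add_comm _ _
  · exact absurd hk (fun hk => aux_sum_ne 𝒜 hx hy (mul_ne_zero hfne hh0)
      (mul_ne_zero hf0 hhne) hdeg hk)
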